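/- (Theorem 3.1, boundedness) Assume f : ℝ → ℝ is continuous with f(0) = 0 and f(I) ≥ 0 for I ≥ 0, and let (S, I, R) be a solution of the discrete system (6) with positive initial data. Set μ̃ = min{μ, γ, δ} and G^k = Σ_{n=0}^{M} (S_n^k + I_n^k + R_n^k). Then the solution is uniformly bounded eventually: limsup_{k→∞} G^k ≤ (g·λ·(M+1) + G^0)·(1 + g·μ̃)/(g·μ̃)². -/

import Mathlib

open Filter Finset

/-- L1-scheme coefficient `b_j^{(β)} = (j+1)^β - j^β` (real powers). -/
noncomputable def bcoef (β : ℝ) (j : ℕ) : ℝ := ((j : ℝ) + 1) ^ β - (j : ℝ) ^ β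

/-- L1 discretization of the Caputo derivative of order `α` with time step `Δt`,
evaluated at time level `n ≥ 1`:
`δ_n^α f = ((Δt)^{-α}/Γ(2-α)) (f n - b_{n-1} f 0 - Σ_{j=1}^{n-1} (b_{j-1}-b_j) f (n-j))`. -/
noncomputable def L1 (α Δt : ℝ) (f : ℕ → ℝ) (n : ℕ) : ℝ :=
  Δt ^ (-α) / Real.Gamma (2 - α) *
    (f n - bcoef (1 - α) (n - 1) * f 0 -
      ∑ j ∈ Finset.Icc 1 (n - 1), (bcoef (1 - α) (j - 1) - bcoef (1 - α) j) * f (n - j))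

lemma bcoef_pos {b : ℝ} (hb : 0 < b) (j : ℕ) : 0 < bcoef b j :=
  sub_pos.2 (Real.rpow_lt_rpow (Nat.cast_nonneg j) (by linarith) hb)

lemma bcoef_zero {b : ℝ} (hb : 0 < b) : bcoef b 0 = 1 := by
  simp [bcoef, Real.zero_rpow hb.ne', Real.one_rpow]

lemma bcoef_succ_lt {b : ℝ} (hb0 : 0 < b) (hb1 : b < 1) (j : ℕ) :
    bcoef b (j + 1) < bcoef b j := by
  have hc := Real.strictConcaveOn_rpow hb0 hb1
  have h := hc.2 (Set.mem_Ici.2 (Nat.cast_nonneg j : (0:ℝ) ≤ j))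
    (Set.mem_Ici.2 (by positivity : (0:ℝ) ≤ (j:ℝ) + 2))
    (by intro h; linarith : (j:ℝ) ≠ (j:ℝ)+2)
    (by norm_num : (0:ℝ) < 1/2) (by norm_num : (0:ℝ) < 1/2) (by norm_num)
  have he : (1/2 : ℝ) • (j:ℝ) + (1/2 : ℝ) • ((j:ℝ)+2) = (j:ℝ)+1 := by
    simp only [smul_eq_mul]; ring
  rw [he] at h
  simp only [smul_eq_mul] at h
  simp only [bcoef]
  push_cast
  have h2 : ((j:ℝ)+1+1) = (j:ℝ)+2 := by ring
  rw [h2]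
  linarith

lemma bcoef_anti {b : ℝ} (hb0 : 0 < b) (hb1 : b < 1) {i j : ℕ} (hij : i ≤ j) :
    bcoef b j ≤ bcoef b i := by
  induction j with
  | zero => simp_all
  | succ m ih =>
    rcases Nat.lt_or_ge i (m+1) with h | h
    · exact (bcoef_succ_lt hb0 hb1 m).le.trans (ih (by omega))
    · have : i = m + 1 := by omega
      simp [this]

lemma bcoef_le_one {b : ℝ} (hb0 : 0 < b) (hb1 : b < 1) (j : ℕ) : bcoef b j ≤ 1 := by
  simpa [bcoef_zero hb0] using bcoef_anti hb0 hb1 (Nat.zero_le j)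

lemma bcoef_w_nonneg {b : ℝ} (hb0 : 0 < b) (hb1 : b < 1) {j : ℕ} (hj : 1 ≤ j) :
    0 ≤ bcoef b (j-1) - bcoef b j := by
  have := bcoef_succ_lt hb0 hb1 (j-1)
  have hj' : j - 1 + 1 = j := by omega
  rw [hj'] at this
  linarith

lemma bcoef_tel {b : ℝ} (k : ℕ) :
    ∑ j ∈ Finset.Icc 1 k, (bcoef b (j-1) - bcoef b j) = bcoef b 0 - bcoef b k := by
  induction k with
  | zero => simp
  | succ m ih =>
    rw [Finset.sum_Icc_succ_top (by omega), ih]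
    simp only [Nat.add_sub_cancel]
    ring

lemma int_tel (M : ℕ) (F : ℤ → ℝ) :
    ∑ n ∈ Finset.Icc (0:ℤ) (M:ℤ), (F (n+1) - F n) = F ((M:ℤ)+1) - F 0 := by
  induction M with
  | zero => simp
  | succ m ih =>
    have hins : Finset.Icc (0:ℤ) ((m:ℤ)+1) = insert ((m:ℤ)+1) (Finset.Icc (0:ℤ) (m:ℤ)) := by
      ext x; simp; omega
    push_cast
    rw [hins, Finset.sum_insert (by simp)]
    rw [ih]; ring

lemma diff_tel (M : ℕ) (F : ℤ → ℝ) (h1 : F (-1) = F 0) (h2 : F ((M:ℤ)+1) = F (M:ℤ)) :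
    ∑ n ∈ Finset.Icc (0:ℤ) (M:ℤ), (F (n-1) - 2*F n + F (n+1)) = 0 := by
  have e1 := int_tel M F
  have e2 := int_tel M (fun n => F (n-1))
  simp only [add_sub_cancel_right] at e2
  have hc : ∀ n ∈ Finset.Icc (0:ℤ) (M:ℤ), F (n-1) - 2*F n + F (n+1)
      = (F (n+1) - F n) - (F n - F (n-1)) := by intro n _; ring
  rw [Finset.sum_congr rfl hc, Finset.sum_sub_distrib, e1]
  have e3 : ∑ n ∈ Finset.Icc (0:ℤ) (M:ℤ), (F n - F (n-1)) = F (M:ℤ) - F (-1) := by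
    have := int_tel M (fun n => F (n-1))
    simpa [sub_add_cancel] using this
  rw [e3, h1, h2]; ring

lemma min_pos (M : ℕ) (X : ℤ → ℝ) (rr : ℝ) (hrr : 0 < rr) (c q : ℤ → ℝ)
    (hc : ∀ n : ℤ, 0 ≤ n → n ≤ (M:ℤ) → 0 ≤ c n)
    (hq : ∀ n : ℤ, 0 ≤ n → n ≤ (M:ℤ) → 0 < q n)
    (heq : ∀ n : ℤ, 0 ≤ n → n ≤ (M:ℤ) →
      (1 + c n) * X n - rr * (X (n-1) - 2*X n + X (n+1)) = q n)
    (hbc1 : X (-1) = X 0) (hbc2 : X ((M:ℤ)+1) = X (M:ℤ)) :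
    ∀ n : ℤ, 0 ≤ n → n ≤ (M:ℤ) → 0 < X n := by
  obtain ⟨n₀, hmem, hmin⟩ := Finset.exists_min_image (Finset.Icc (0:ℤ) (M:ℤ)) X
    ⟨0, by simp⟩
  simp only [Finset.mem_Icc] at hmem
  have hminI : ∀ m : ℤ, 0 ≤ m → m ≤ (M:ℤ) → X n₀ ≤ X m := by
    intro m h1 h2; exact hmin m (Finset.mem_Icc.2 ⟨h1, h2⟩)
  have hL : X n₀ ≤ X (n₀ - 1) := by
    rcases eq_or_lt_of_le hmem.1 with h | h
    · rw [← h]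
      have e : (0:ℤ)-1 = -1 := by norm_num
      rw [e, hbc1]
    · exact hminI _ (by omega) (by omega)
  have hR : X n₀ ≤ X (n₀ + 1) := by
    rcases eq_or_lt_of_le hmem.2 with h | h
    · rw [h, hbc2]
    · exact hminI _ (by omega) (by omega)
  have hΔ : 0 ≤ X (n₀-1) - 2*X n₀ + X (n₀+1) := by linarith
  have he := heq n₀ hmem.1 hmem.2
  have hq0 := hq n₀ hmem.1 hmem.2
  have hc0 := hc n₀ hmem.1 hmem.2
  have hXpos : 0 < X n₀ := by nlinarith
  intro n h1 h2
  exact lt_of_lt_of_le hXpos (hminI n h1 h2)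

lemma sum_eq_of_scheme (M : ℕ) (F Q : ℤ → ℝ) (rr : ℝ)
    (hbc1 : F (-1) = F 0) (hbc2 : F ((M:ℤ)+1) = F (M:ℤ))
    (h : ∀ n : ℤ, 0 ≤ n → n ≤ (M:ℤ) → F n - rr * (F (n-1) - 2*F n + F (n+1)) = Q n) :
    ∑ n ∈ Finset.Icc (0:ℤ) (M:ℤ), F n = ∑ n ∈ Finset.Icc (0:ℤ) (M:ℤ), Q n := by
  have hd := diff_tel M F hbc1 hbc2
  have hQ : ∑ n ∈ Finset.Icc (0:ℤ) (M:ℤ), Q n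
      = ∑ n ∈ Finset.Icc (0:ℤ) (M:ℤ), (F n - rr*(F (n-1) - 2*F n + F (n+1))) :=
    Finset.sum_congr rfl (fun n hn => by
      obtain ⟨h1, h2⟩ := Finset.mem_Icc.1 hn
      exact (h n h1 h2).symm)
  rw [hQ, Finset.sum_sub_distrib, ← Finset.mul_sum, hd, mul_zero, sub_zero]

lemma expand_sum (M k : ℕ) (b : ℝ) (c0 : ℝ) (X0 : ℤ → ℝ) (Xp : ℕ → ℤ → ℝ)
    (g u : ℝ) (E : ℤ → ℝ) :
    ∑ n ∈ Finset.Icc (0:ℤ) (M:ℤ),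
      (c0 * X0 n + (∑ j ∈ Finset.Icc 1 k, (bcoef b (j-1) - bcoef b j) * Xp j n)
        + g * (u - E n))
    = c0 * (∑ n ∈ Finset.Icc (0:ℤ) (M:ℤ), X0 n)
      + (∑ j ∈ Finset.Icc 1 k, (bcoef b (j-1) - bcoef b j) *
          (∑ n ∈ Finset.Icc (0:ℤ) (M:ℤ), Xp j n))
      + g * (u * ((M:ℝ)+1) - ∑ n ∈ Finset.Icc (0:ℤ) (M:ℤ), E n) := by
  have hcard : (Finset.Icc (0:ℤ) (M:ℤ)).card = M + 1 := by
    rw [Int.card_Icc]; simp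
  have h1 : ∑ n ∈ Finset.Icc (0:ℤ) (M:ℤ),
      (∑ j ∈ Finset.Icc 1 k, (bcoef b (j-1) - bcoef b j) * Xp j n)
      = ∑ j ∈ Finset.Icc 1 k, (bcoef b (j-1) - bcoef b j) *
          (∑ n ∈ Finset.Icc (0:ℤ) (M:ℤ), Xp j n) := by
    rw [Finset.sum_comm]
    exact Finset.sum_congr rfl fun j _ => (Finset.mul_sum _ _ _).symm
  have h2 : ∑ n ∈ Finset.Icc (0:ℤ) (M:ℤ), (g * (u - E n))
      = g * (u * ((M:ℝ)+1) - ∑ n ∈ Finset.Icc (0:ℤ) (M:ℤ), E n) := by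
    rw [← Finset.mul_sum, Finset.sum_sub_distrib, Finset.sum_const, hcard,
      nsmul_eq_mul]
    push_cast
    ring
  rw [Finset.sum_add_distrib, Finset.sum_add_distrib, ← Finset.mul_sum, h1, h2]

set_option maxHeartbeats 2000000 in
/-- Theorem 3.1, eventual uniform boundedness of the total population. -/
theorem stmt_12
    (f : ℝ → ℝ) (hfc : Continuous f) (hf0 : f 0 = 0) (hfnn : ∀ y : ℝ, 0 ≤ y → 0 ≤ f y)
    (M : ℕ) (hM : 1 ≤ M)
    (α Δt Δx d1 d2 d3 lam β γ μ r δ : ℝ)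
    (hα0 : 0 < α) (hα1 : α < 1) (hΔt : 0 < Δt) (hΔx : 0 < Δx)
    (hd1 : 0 < d1) (hd2 : 0 < d2) (hd3 : 0 < d3)
    (hlam : 0 < lam) (hβ : 0 < β) (hγ : 0 < γ) (hμ : 0 < μ) (hr : 0 < r) (hδ : 0 < δ)
    (S I R : ℕ → ℤ → ℝ)
    (hS : ∀ (k : ℕ) (n : ℤ), 0 ≤ n → n ≤ (M : ℤ) →
      S (k + 1) n - d1 * Real.Gamma (2 - α) * Δt ^ α / Δx ^ 2 *
          (S (k + 1) (n - 1) - 2 * S (k + 1) n + S (k + 1) (n + 1)) =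
        bcoef (1 - α) k * S 0 n +
          (∑ j ∈ Finset.Icc 1 k, (bcoef (1 - α) (j - 1) - bcoef (1 - α) j) * S (k + 1 - j) n) +
          Real.Gamma (2 - α) * Δt ^ α *
            (lam - β * S (k + 1) n * f (I k n) - γ * S (k + 1) n))
    (hI : ∀ (k : ℕ) (n : ℤ), 0 ≤ n → n ≤ (M : ℤ) →
      I (k + 1) n - d2 * Real.Gamma (2 - α) * Δt ^ α / Δx ^ 2 *
          (I (k + 1) (n - 1) - 2 * I (k + 1) n + I (k + 1) (n + 1)) =
        bcoef (1 - α) k * I 0 n +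
          (∑ j ∈ Finset.Icc 1 k, (bcoef (1 - α) (j - 1) - bcoef (1 - α) j) * I (k + 1 - j) n) +
          Real.Gamma (2 - α) * Δt ^ α *
            (β * S (k + 1) n * f (I k n) - (μ + r) * I (k + 1) n))
    (hR : ∀ (k : ℕ) (n : ℤ), 0 ≤ n → n ≤ (M : ℤ) →
      R (k + 1) n - d3 * Real.Gamma (2 - α) * Δt ^ α / Δx ^ 2 *
          (R (k + 1) (n - 1) - 2 * R (k + 1) n + R (k + 1) (n + 1)) =
        bcoef (1 - α) k * R 0 n +
          (∑ j ∈ Finset.Icc 1 k, (bcoef (1 - α) (j - 1) - bcoef (1 - α) j) * R (k + 1 - j) n) +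
          Real.Gamma (2 - α) * Δt ^ α *
            (r * I (k + 1) n - δ * R (k + 1) n))
    (hSbc : ∀ k : ℕ, S k (-1) = S k 0 ∧ S k ((M : ℤ) + 1) = S k (M : ℤ))
    (hIbc : ∀ k : ℕ, I k (-1) = I k 0 ∧ I k ((M : ℤ) + 1) = I k (M : ℤ))
    (hRbc : ∀ k : ℕ, R k (-1) = R k 0 ∧ R k ((M : ℤ) + 1) = R k (M : ℤ))
    (hSinit : ∀ n : ℤ, 0 ≤ n → n ≤ (M : ℤ) → 0 < S 0 n)
    (hIinit : ∀ n : ℤ, 0 ≤ n → n ≤ (M : ℤ) → 0 < I 0 n)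
    (hRinit : ∀ n : ℤ, 0 ≤ n → n ≤ (M : ℤ) → 0 < R 0 n)
    :
    Filter.limsup
        (fun k : ℕ => ∑ n ∈ Finset.Icc (0 : ℤ) (M : ℤ), (S k n + I k n + R k n))
        Filter.atTop ≤
      (Real.Gamma (2 - α) * Δt ^ α * lam * ((M : ℝ) + 1) +
          ∑ n ∈ Finset.Icc (0 : ℤ) (M : ℤ), (S 0 n + I 0 n + R 0 n)) *
        (1 + Real.Gamma (2 - α) * Δt ^ α * min μ (min γ δ)) /
        (Real.Gamma (2 - α) * Δt ^ α * min μ (min γ δ)) ^ 2 := by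
  have hΓ : 0 < Real.Gamma (2 - α) := Real.Gamma_pos_of_pos (by linarith)
  have hΔtα : 0 < Δt ^ α := Real.rpow_pos_of_pos hΔt α
  set mt := min μ (min γ δ) with hmtdef
  set g := Real.Gamma (2 - α) * Δt ^ α with hgdef
  have hg : 0 < g := mul_pos hΓ hΔtα
  have hmt : 0 < mt := lt_min hμ (lt_min hγ hδ)
  have hmtμ : mt ≤ μ := min_le_left _ _
  have hmtγ : mt ≤ γ := le_trans (min_le_right _ _) (min_le_left _ _)
  have hmtδ : mt ≤ δ := le_trans (min_le_right _ _) (min_le_right _ _)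
  have hx : 0 < g * mt := mul_pos hg hmt
  have hb0 : (0:ℝ) < 1 - α := by linarith
  have hb1 : (1:ℝ) - α < 1 := by linarith
  have hr1 : 0 < d1 * Real.Gamma (2 - α) * Δt ^ α / Δx ^ 2 :=
    div_pos (mul_pos (mul_pos hd1 hΓ) hΔtα) (by positivity)
  have hr2 : 0 < d2 * Real.Gamma (2 - α) * Δt ^ α / Δx ^ 2 :=
    div_pos (mul_pos (mul_pos hd2 hΓ) hΔtα) (by positivity)
  have hr3 : 0 < d3 * Real.Gamma (2 - α) * Δt ^ α / Δx ^ 2 :=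
    div_pos (mul_pos (mul_pos hd3 hΓ) hΔtα) (by positivity)
  -- positivity of the solution
  have pos : ∀ k : ℕ, ∀ n : ℤ, 0 ≤ n → n ≤ (M:ℤ) →
      0 < S k n ∧ 0 < I k n ∧ 0 < R k n := by
    intro k
    induction k using Nat.strong_induction_on with
    | _ k ih =>
      cases k with
      | zero => exact fun n h1 h2 => ⟨hSinit n h1 h2, hIinit n h1 h2, hRinit n h1 h2⟩
      | succ k =>
        have hwnn : ∀ j : ℕ, 1 ≤ j → 0 ≤ bcoef (1-α) (j-1) - bcoef (1-α) j :=
          fun j hj => bcoef_w_nonneg hb0 hb1 hj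
        have hSpos : ∀ n : ℤ, 0 ≤ n → n ≤ (M:ℤ) → 0 < S (k+1) n := by
          refine min_pos M (S (k+1)) (d1 * Real.Gamma (2 - α) * Δt ^ α / Δx ^ 2) hr1
            (fun n => g * β * f (I k n) + g * γ)
            (fun n => bcoef (1-α) k * S 0 n
              + (∑ j ∈ Finset.Icc 1 k, (bcoef (1-α) (j-1) - bcoef (1-α) j) * S (k+1-j) n)
              + g * lam) ?_ ?_ ?_ (hSbc (k+1)).1 (hSbc (k+1)).2
          · intro n h1 h2
            have hI0 := (ih k (by omega) n h1 h2).2.1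
            have hf := hfnn (I k n) hI0.le
            have h3 : 0 ≤ g * β * f (I k n) := mul_nonneg (mul_nonneg hg.le hβ.le) hf
            nlinarith [mul_pos hg hγ]
          · intro n h1 h2
            have t1 : 0 < bcoef (1-α) k * S 0 n :=
              mul_pos (bcoef_pos hb0 k) (hSinit n h1 h2)
            have t2 : 0 ≤ ∑ j ∈ Finset.Icc 1 k,
                (bcoef (1-α) (j-1) - bcoef (1-α) j) * S (k+1-j) n := by
              refine Finset.sum_nonneg fun j hj => ?_
              obtain ⟨hj1, hj2⟩ := Finset.mem_Icc.1 hj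
              exact mul_nonneg (hwnn j hj1) ((ih (k+1-j) (by omega) n h1 h2).1.le
                )
            have t3 : 0 < g * lam := mul_pos hg hlam
            linarith
          · intro n h1 h2
            linear_combination hS k n h1 h2
        have hIpos : ∀ n : ℤ, 0 ≤ n → n ≤ (M:ℤ) → 0 < I (k+1) n := by
          refine min_pos M (I (k+1)) (d2 * Real.Gamma (2 - α) * Δt ^ α / Δx ^ 2) hr2
            (fun n => g * (μ + r))
            (fun n => bcoef (1-α) k * I 0 n
              + (∑ j ∈ Finset.Icc 1 k, (bcoef (1-α) (j-1) - bcoef (1-α) j) * I (k+1-j) n)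
              + g * (β * S (k+1) n * f (I k n))) ?_ ?_ ?_ (hIbc (k+1)).1 (hIbc (k+1)).2
          · intro n h1 h2
            exact mul_nonneg hg.le (by linarith)
          · intro n h1 h2
            have t1 : 0 < bcoef (1-α) k * I 0 n :=
              mul_pos (bcoef_pos hb0 k) (hIinit n h1 h2)
            have t2 : 0 ≤ ∑ j ∈ Finset.Icc 1 k,
                (bcoef (1-α) (j-1) - bcoef (1-α) j) * I (k+1-j) n := by
              refine Finset.sum_nonneg fun j hj => ?_
              obtain ⟨hj1, hj2⟩ := Finset.mem_Icc.1 hj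
              exact mul_nonneg (hwnn j hj1) ((ih (k+1-j) (by omega) n h1 h2).2.1.le)
            have hI0 := (ih k (by omega) n h1 h2).2.1
            have hf := hfnn (I k n) hI0.le
            have t3 : 0 ≤ g * (β * S (k+1) n * f (I k n)) :=
              mul_nonneg hg.le (mul_nonneg (mul_nonneg hβ.le (hSpos n h1 h2).le) hf)
            linarith
          · intro n h1 h2
            linear_combination hI k n h1 h2
        have hRpos : ∀ n : ℤ, 0 ≤ n → n ≤ (M:ℤ) → 0 < R (k+1) n := by
          refine min_pos M (R (k+1)) (d3 * Real.Gamma (2 - α) * Δt ^ α / Δx ^ 2) hr3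
            (fun n => g * δ)
            (fun n => bcoef (1-α) k * R 0 n
              + (∑ j ∈ Finset.Icc 1 k, (bcoef (1-α) (j-1) - bcoef (1-α) j) * R (k+1-j) n)
              + g * (r * I (k+1) n)) ?_ ?_ ?_ (hRbc (k+1)).1 (hRbc (k+1)).2
          · intro n h1 h2
            exact mul_nonneg hg.le hδ.le
          · intro n h1 h2
            have t1 : 0 < bcoef (1-α) k * R 0 n :=
              mul_pos (bcoef_pos hb0 k) (hRinit n h1 h2)
            have t2 : 0 ≤ ∑ j ∈ Finset.Icc 1 k,
                (bcoef (1-α) (j-1) - bcoef (1-α) j) * R (k+1-j) n := by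
              refine Finset.sum_nonneg fun j hj => ?_
              obtain ⟨hj1, hj2⟩ := Finset.mem_Icc.1 hj
              exact mul_nonneg (hwnn j hj1) ((ih (k+1-j) (by omega) n h1 h2).2.2.le)
            have t3 : 0 < g * (r * I (k+1) n) :=
              mul_pos hg (mul_pos hr (hIpos n h1 h2))
            linarith
          · intro n h1 h2
            linear_combination hR k n h1 h2
        exact fun n h1 h2 => ⟨hSpos n h1 h2, hIpos n h1 h2, hRpos n h1 h2⟩
  set G : ℕ → ℝ := fun k : ℕ => ∑ n ∈ Finset.Icc (0 : ℤ) (M : ℤ), (S k n + I k n + R k n)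
    with hGdef
  have hsplit : ∀ m : ℕ, G m = (∑ n ∈ Finset.Icc (0:ℤ) (M:ℤ), S m n)
      + (∑ n ∈ Finset.Icc (0:ℤ) (M:ℤ), I m n)
      + (∑ n ∈ Finset.Icc (0:ℤ) (M:ℤ), R m n) := by
    intro m
    simp only [hGdef]
    rw [Finset.sum_add_distrib, Finset.sum_add_distrib]
  have Gpos : ∀ k, 0 < G k := by
    intro k
    simp only [hGdef]
    refine Finset.sum_pos (fun n hn => ?_) ⟨0, by simp⟩
    obtain ⟨h1, h2⟩ := Finset.mem_Icc.1 hn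
    obtain ⟨p1, p2, p3⟩ := pos k n h1 h2
    linarith
  -- key recursion inequality
  have key : ∀ k : ℕ, (1 + g * mt) * G (k+1) ≤ bcoef (1-α) k * G 0
      + (∑ j ∈ Finset.Icc 1 k, (bcoef (1-α) (j-1) - bcoef (1-α) j) * G (k+1-j))
      + g * lam * ((M:ℝ)+1) := by
    intro k
    have eS : ∑ n ∈ Finset.Icc (0:ℤ) (M:ℤ), S (k+1) n
        = ∑ n ∈ Finset.Icc (0:ℤ) (M:ℤ),
          (bcoef (1-α) k * S 0 n
            + (∑ j ∈ Finset.Icc 1 k, (bcoef (1-α) (j-1) - bcoef (1-α) j) * S (k+1-j) n)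
            + g * (lam - (β * S (k+1) n * f (I k n) + γ * S (k+1) n))) :=
      sum_eq_of_scheme M _ _ (d1 * Real.Gamma (2 - α) * Δt ^ α / Δx ^ 2) (hSbc (k+1)).1 (hSbc (k+1)).2
        (fun n h1 h2 => by linear_combination hS k n h1 h2)
    have eI : ∑ n ∈ Finset.Icc (0:ℤ) (M:ℤ), I (k+1) n
        = ∑ n ∈ Finset.Icc (0:ℤ) (M:ℤ),
          (bcoef (1-α) k * I 0 n
            + (∑ j ∈ Finset.Icc 1 k, (bcoef (1-α) (j-1) - bcoef (1-α) j) * I (k+1-j) n)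
            + g * ((0:ℝ) - ((μ + r) * I (k+1) n - β * S (k+1) n * f (I k n)))) :=
      sum_eq_of_scheme M _ _ (d2 * Real.Gamma (2 - α) * Δt ^ α / Δx ^ 2) (hIbc (k+1)).1 (hIbc (k+1)).2
        (fun n h1 h2 => by linear_combination hI k n h1 h2)
    have eR : ∑ n ∈ Finset.Icc (0:ℤ) (M:ℤ), R (k+1) n
        = ∑ n ∈ Finset.Icc (0:ℤ) (M:ℤ),
          (bcoef (1-α) k * R 0 n
            + (∑ j ∈ Finset.Icc 1 k, (bcoef (1-α) (j-1) - bcoef (1-α) j) * R (k+1-j) n)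
            + g * ((0:ℝ) - (δ * R (k+1) n - r * I (k+1) n))) :=
      sum_eq_of_scheme M _ _ (d3 * Real.Gamma (2 - α) * Δt ^ α / Δx ^ 2) (hRbc (k+1)).1 (hRbc (k+1)).2
        (fun n h1 h2 => by linear_combination hR k n h1 h2)
    rw [expand_sum M k (1-α) _ _ (fun j => S (k+1-j)) g lam
      (fun n => β * S (k+1) n * f (I k n) + γ * S (k+1) n)] at eS
    rw [expand_sum M k (1-α) _ _ (fun j => I (k+1-j)) g 0
      (fun n => (μ + r) * I (k+1) n - β * S (k+1) n * f (I k n))] at eI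
    rw [expand_sum M k (1-α) _ _ (fun j => R (k+1-j)) g 0
      (fun n => δ * R (k+1) n - r * I (k+1) n)] at eR
    have hWsum : (∑ j ∈ Finset.Icc 1 k, (bcoef (1-α) (j-1) - bcoef (1-α) j) *
          (∑ n ∈ Finset.Icc (0:ℤ) (M:ℤ), S (k+1-j) n))
        + (∑ j ∈ Finset.Icc 1 k, (bcoef (1-α) (j-1) - bcoef (1-α) j) *
          (∑ n ∈ Finset.Icc (0:ℤ) (M:ℤ), I (k+1-j) n))
        + (∑ j ∈ Finset.Icc 1 k, (bcoef (1-α) (j-1) - bcoef (1-α) j) *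
          (∑ n ∈ Finset.Icc (0:ℤ) (M:ℤ), R (k+1-j) n))
        = ∑ j ∈ Finset.Icc 1 k, (bcoef (1-α) (j-1) - bcoef (1-α) j) * G (k+1-j) := by
      rw [← Finset.sum_add_distrib, ← Finset.sum_add_distrib]
      refine Finset.sum_congr rfl fun j _ => ?_
      rw [hsplit (k+1-j)]
      ring
    have hEsum : (∑ n ∈ Finset.Icc (0:ℤ) (M:ℤ),
          (β * S (k+1) n * f (I k n) + γ * S (k+1) n))
        + (∑ n ∈ Finset.Icc (0:ℤ) (M:ℤ),
          ((μ + r) * I (k+1) n - β * S (k+1) n * f (I k n)))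
        + (∑ n ∈ Finset.Icc (0:ℤ) (M:ℤ), (δ * R (k+1) n - r * I (k+1) n))
        = ∑ n ∈ Finset.Icc (0:ℤ) (M:ℤ),
          (γ * S (k+1) n + μ * I (k+1) n + δ * R (k+1) n) := by
      rw [← Finset.sum_add_distrib, ← Finset.sum_add_distrib]
      refine Finset.sum_congr rfl fun n _ => ?_
      ring
    have expand : G (k+1) = bcoef (1-α) k * G 0
        + (∑ j ∈ Finset.Icc 1 k, (bcoef (1-α) (j-1) - bcoef (1-α) j) * G (k+1-j))
        + g * lam * ((M:ℝ)+1)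
        - g * ∑ n ∈ Finset.Icc (0:ℤ) (M:ℤ),
            (γ * S (k+1) n + μ * I (k+1) n + δ * R (k+1) n) := by
      linear_combination hsplit (k+1) + eS + eI + eR + hWsum - g * hEsum
        - bcoef (1-α) k * hsplit 0
    have hdecay : mt * G (k+1) ≤ ∑ n ∈ Finset.Icc (0:ℤ) (M:ℤ),
        (γ * S (k+1) n + μ * I (k+1) n + δ * R (k+1) n) := by
      have : mt * G (k+1) = ∑ n ∈ Finset.Icc (0:ℤ) (M:ℤ),
          (mt * (S (k+1) n + I (k+1) n + R (k+1) n)) := by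
        simp only [hGdef]
        rw [Finset.mul_sum]
      rw [this]
      refine Finset.sum_le_sum fun n hn => ?_
      obtain ⟨h1, h2⟩ := Finset.mem_Icc.1 hn
      obtain ⟨p1, p2, p3⟩ := pos (k+1) n h1 h2
      nlinarith
    nlinarith [expand, hdecay, hg]
  -- uniform bound for k ≥ 1
  have hG0 : (∑ n ∈ Finset.Icc (0:ℤ) (M:ℤ), (S 0 n + I 0 n + R 0 n)) = G 0 := by
    simp only [hGdef]
  rw [hG0]
  set W := (g * lam * ((M:ℝ) + 1) + G 0) * (1 + g * mt) / (g * mt) ^ 2 with hWdef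
  have hW : 0 < W := by
    have h1 : 0 < g * lam * ((M:ℝ)+1) + G 0 := by
      have := Gpos 0
      have : 0 < g * lam * ((M:ℝ)+1) := by positivity
      linarith [Gpos 0]
    rw [hWdef]
    positivity
  have haxW : g * lam * ((M:ℝ)+1) + G 0 ≤ (g * mt) * W := by
    have hnum : 0 < g * lam * ((M:ℝ)+1) + G 0 := by
      have h2 : 0 < g * lam * ((M:ℝ)+1) := by positivity
      linarith [Gpos 0]
    have he : (g * mt) * W = (g * lam * ((M:ℝ)+1) + G 0) * (1 + g * mt) / (g * mt) := by
      rw [hWdef]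
      field_simp
    rw [he, le_div_iff₀ hx]
    nlinarith
  have bound : ∀ k : ℕ, G (k+1) ≤ W := by
    intro k
    induction k using Nat.strong_induction_on with
    | _ k ih =>
      have hk := key k
      have hsum_le : ∑ j ∈ Finset.Icc 1 k,
          (bcoef (1-α) (j-1) - bcoef (1-α) j) * G (k+1-j)
          ≤ (1 - bcoef (1-α) k) * W := by
        calc ∑ j ∈ Finset.Icc 1 k, (bcoef (1-α) (j-1) - bcoef (1-α) j) * G (k+1-j)
            ≤ ∑ j ∈ Finset.Icc 1 k, (bcoef (1-α) (j-1) - bcoef (1-α) j) * W := by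
              refine Finset.sum_le_sum fun j hj => ?_
              obtain ⟨hj1, hj2⟩ := Finset.mem_Icc.1 hj
              have hw := bcoef_w_nonneg hb0 hb1 hj1
              have hGle : G (k+1-j) ≤ W := by
                have e : k+1-j = (k-j)+1 := by omega
                rw [e]
                exact ih (k-j) (by omega)
              exact mul_le_mul_of_nonneg_left hGle hw
          _ = (bcoef (1-α) 0 - bcoef (1-α) k) * W := by
              rw [← Finset.sum_mul, bcoef_tel]
          _ = (1 - bcoef (1-α) k) * W := by rw [bcoef_zero hb0]
      have hbk1 := bcoef_le_one hb0 hb1 k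
      have hbk0 := bcoef_pos hb0 k
      have hG0p := Gpos 0
      nlinarith [hk, hsum_le, haxW, mul_nonneg hbk0.le hW.le,
        mul_nonneg (sub_nonneg.2 hbk1) hG0p.le, hx, hW]
  refine Filter.limsup_le_of_le ?_ ?_
  · exact Filter.isCoboundedUnder_le_of_eventually_le Filter.atTop (x := 0)
      (Filter.Eventually.of_forall fun k => (Gpos k).le)
  · refine Filter.eventually_atTop.2 ⟨1, fun k hk => ?_⟩
    obtain ⟨m, rfl⟩ : ∃ m, k = m + 1 := ⟨k - 1, by omega⟩
    exact bound m
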